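/- arXiv:1409.6045 — 13 statements merged into one kernel-verified Lean document; each statement's English description precedes it below -/
import Mathlib

section
/- Let H be a real inner product space, m ∈ ℕ, v : Fin m → H a family of vectors with 0 < r ≤ ‖v i‖ ≤ R for all i, and K the Gram matrix with entries K i j = ⟪v i, v j⟫. If the dictionary is δ-distant, i.e., for all i ≠ j we have ‖v i‖² − ⟪v i, v j⟫² / ‖v j‖² ≥ δ² (with δ ≥ 0), then every eigenvalue λ of the symmetric matrix K satisfies r² − (m−1)·R·√(R² − δ²) ≤ λ ≤ R² + (m−1)·R·√(R² − δ²). -/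
open scoped RealInnerProductSpace BigOperators

/-- Eigenvalue bounds for the Gram matrix of a δ-distant dictionary. -/
theorem gram_eigenvalue_bounds_distant
    {H : Type*} [NormedAddCommGroup H] [InnerProductSpace ℝ H]
    {m : ℕ} (v : Fin m → H) (r R δ : ℝ)
    (hr : 0 < r) (hδ : 0 ≤ δ)
    (hlow : ∀ i, r ≤ ‖v i‖) (hup : ∀ i, ‖v i‖ ≤ R)
    (hdist : ∀ i j, i ≠ j → δ ^ 2 ≤ ‖v i‖ ^ 2 - ⟪v i, v j⟫ ^ 2 / ‖v j‖ ^ 2)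
    (K : Matrix (Fin m) (Fin m) ℝ) (hK : ∀ i j, K i j = ⟪v i, v j⟫)
    (lam : ℝ) (hlam : ∃ x : Fin m → ℝ, x ≠ 0 ∧ K.mulVec x = lam • x) :
    r ^ 2 - ((m : ℝ) - 1) * R * Real.sqrt (R ^ 2 - δ ^ 2) ≤ lam ∧
      lam ≤ R ^ 2 + ((m : ℝ) - 1) * R * Real.sqrt (R ^ 2 - δ ^ 2) := by
  obtain ⟨x, hx0, hxe⟩ := hlam
  have hμ : Module.End.HasEigenvalue (Matrix.toLin' K) lam := by
    apply Module.End.hasEigenvalue_of_hasEigenvector (x := x)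
    refine ⟨?_, hx0⟩
    rw [Module.End.mem_eigenspace_iff, Matrix.toLin'_apply, hxe]
  obtain ⟨k, hk⟩ := eigenvalue_mem_ball hμ
  rw [Metric.mem_closedBall, Real.dist_eq] at hk
  set S := ∑ j ∈ Finset.univ.erase k, ‖K k j‖ with hS
  have hRpos : 0 < R := lt_of_lt_of_le hr ((hlow k).trans (hup k))
  have hB0 : 0 ≤ R * Real.sqrt (R ^ 2 - δ ^ 2) :=
    mul_nonneg hRpos.le (Real.sqrt_nonneg _)
  have hSle : S ≤ ((m : ℝ) - 1) * (R * Real.sqrt (R ^ 2 - δ ^ 2)) := by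
    have hcard : ((Finset.univ.erase k).card : ℝ) = (m : ℝ) - 1 := by
      rw [Finset.card_erase_of_mem (Finset.mem_univ k), Finset.card_univ, Fintype.card_fin]
      have h1 : 1 ≤ m := Fin.pos k
      push_cast [Nat.cast_sub h1]
      ring
    rw [← hcard]
    have := Finset.sum_le_card_nsmul (Finset.univ.erase k) (fun j => ‖K k j‖)
      (R * Real.sqrt (R ^ 2 - δ ^ 2)) ?_
    · rw [nsmul_eq_mul] at this; exact this
    intro j hj
    have hjk : j ≠ k := Finset.ne_of_mem_erase hj
    have hdkj := hdist k j (Ne.symm hjk)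
    have hvj : 0 < ‖v j‖ := lt_of_lt_of_le hr (hlow j)
    -- ⟪v k, v j⟫^2 ≤ ‖v j‖^2 * (‖v k‖^2 - δ^2)
    have h1 : ⟪v k, v j⟫ ^ 2 ≤ ‖v j‖ ^ 2 * (R ^ 2 - δ ^ 2) := by
      have h2 : ⟪v k, v j⟫ ^ 2 / ‖v j‖ ^ 2 ≤ R ^ 2 - δ ^ 2 := by
        have := hup k
        nlinarith [hdkj, hlow k, hr.le]
      calc ⟪v k, v j⟫ ^ 2 = (⟪v k, v j⟫ ^ 2 / ‖v j‖ ^ 2) * ‖v j‖ ^ 2 := by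
            field_simp
        _ ≤ (R ^ 2 - δ ^ 2) * ‖v j‖ ^ 2 := by
            apply mul_le_mul_of_nonneg_right h2 (by positivity)
        _ = ‖v j‖ ^ 2 * (R ^ 2 - δ ^ 2) := by ring
    have hRδ : 0 ≤ R ^ 2 - δ ^ 2 := by nlinarith [sq_nonneg ⟪v k, v j⟫, pow_pos hvj 2]
    have h3 : ⟪v k, v j⟫ ^ 2 ≤ (R * Real.sqrt (R ^ 2 - δ ^ 2)) ^ 2 := by
      have : ‖v j‖ ^ 2 * (R ^ 2 - δ ^ 2) ≤ R ^ 2 * (R ^ 2 - δ ^ 2) := by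
        apply mul_le_mul_of_nonneg_right _ hRδ
        nlinarith [hup j, hlow j, hr.le]
      rw [mul_pow, Real.sq_sqrt hRδ]
      linarith
    show ‖K k j‖ ≤ _
    rw [Real.norm_eq_abs, hK]
    nlinarith [abs_nonneg ⟪v k, v j⟫, sq_abs ⟪v k, v j⟫, h3, hB0]
  have hdiag : K k k = ‖v k‖ ^ 2 := by
    rw [hK, real_inner_self_eq_norm_sq]
  have hklo : r ^ 2 ≤ K k k := by
    rw [hdiag]; nlinarith [hlow k, hr.le]
  have hkhi : K k k ≤ R ^ 2 := by
    rw [hdiag]; nlinarith [hup k, hlow k, hr.le]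
  rw [abs_le] at hk
  constructor
  · have : ((m : ℝ) - 1) * R * Real.sqrt (R ^ 2 - δ ^ 2)
        = ((m : ℝ) - 1) * (R * Real.sqrt (R ^ 2 - δ ^ 2)) := by ring
    rw [this]
    linarith [hk.1]
  · have : ((m : ℝ) - 1) * R * Real.sqrt (R ^ 2 - δ ^ 2)
        = ((m : ℝ) - 1) * (R * Real.sqrt (R ^ 2 - δ ^ 2)) := by ring
    rw [this]
    linarith [hk.2]
end

section
/- Let H be a real inner product space, m ∈ ℕ, and v : Fin m → H a family of vectors with 0 < r ≤ ‖v i‖ ≤ R for all i. If the dictionary is δ-distant, i.e., for all i ≠ j we have ‖v i‖² − ⟪v i, v j⟫² / ‖v j‖² ≥ δ² (with δ ≥ 0), and if (m−1)·R·√(R² − δ²) < r², then the family (v i) is linearly independent. -/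
open scoped RealInnerProductSpace BigOperators

/-- Linear independence of a δ-distant dictionary. -/
theorem linearIndependent_of_distant
    {H : Type*} [NormedAddCommGroup H] [InnerProductSpace ℝ H]
    {m : ℕ} (v : Fin m → H) (r R δ : ℝ)
    (hr : 0 < r) (hδ : 0 ≤ δ)
    (hlow : ∀ i, r ≤ ‖v i‖) (hup : ∀ i, ‖v i‖ ≤ R)
    (hdist : ∀ i j, i ≠ j → δ ^ 2 ≤ ‖v i‖ ^ 2 - ⟪v i, v j⟫ ^ 2 / ‖v j‖ ^ 2)
    (hcond : ((m : ℝ) - 1) * R * Real.sqrt (R ^ 2 - δ ^ 2) < r ^ 2) :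
    LinearIndependent ℝ v := by
  rw [Fintype.linearIndependent_iff]
  intro g hg
  by_contra hne
  push_neg at hne
  obtain ⟨i0, hi0⟩ := hne
  obtain ⟨i, -, hi⟩ := Finset.exists_max_image Finset.univ (fun j => |g j|)
    ⟨i0, Finset.mem_univ i0⟩
  have hgi : 0 < |g i| := lt_of_lt_of_le (abs_pos.mpr hi0) (hi i0 (Finset.mem_univ i0))
  have hR : 0 < R := lt_of_lt_of_le hr (le_trans (hlow i) (hup i))
  have key : ∀ j, j ≠ i → |⟪v i, v j⟫| ≤ R * Real.sqrt (R ^ 2 - δ ^ 2) := by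
    intro j hj
    have hd := hdist i j (Ne.symm hj)
    have hvj0 : (0:ℝ) < ‖v j‖ := lt_of_lt_of_le hr (hlow j)
    have hvj : (0:ℝ) < ‖v j‖ ^ 2 := by positivity
    have hnn : 0 ≤ ‖v i‖ ^ 2 - δ ^ 2 := by
      have h3 : 0 ≤ ⟪v i, v j⟫ ^ 2 / ‖v j‖ ^ 2 := by positivity
      linarith
    have hb : ‖v i‖ ^ 2 ≤ R ^ 2 := by have := hup i; have := hlow i; nlinarith
    have hb' : ‖v j‖ ^ 2 ≤ R ^ 2 := by have := hup j; have := hlow j; nlinarith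
    have hRδ : 0 ≤ R ^ 2 - δ ^ 2 := by linarith
    have h1 : ⟪v i, v j⟫ ^ 2 ≤ (‖v i‖ ^ 2 - δ ^ 2) * ‖v j‖ ^ 2 := by
      rw [← div_le_iff₀ hvj]
      linarith
    have h2 : ⟪v i, v j⟫ ^ 2 ≤ (R ^ 2 - δ ^ 2) * R ^ 2 := by nlinarith
    have := Real.sqrt_le_sqrt h2
    rwa [Real.sqrt_sq_eq_abs, Real.sqrt_mul hRδ,
      Real.sqrt_sq hR.le, mul_comm] at this
  have h0 : ∑ j, g j * ⟪v i, v j⟫ = 0 := by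
    have h : ⟪v i, ∑ j, g j • v j⟫ = 0 := by rw [hg, inner_zero_right]
    rw [inner_sum] at h
    simp only [real_inner_smul_right] at h
    exact h
  have hsplit : g i * ⟪v i, v i⟫ + ∑ j ∈ Finset.univ.erase i, g j * ⟪v i, v j⟫ = 0 := by
    have h := Finset.add_sum_erase Finset.univ (fun j => g j * ⟪v i, v j⟫) (Finset.mem_univ i)
    rw [h]
    exact h0
  have hnormsq : ⟪v i, v i⟫ = ‖v i‖ ^ 2 := real_inner_self_eq_norm_sq (v i)
  have habs : |g i| * ‖v i‖ ^ 2 ≤ ∑ j ∈ Finset.univ.erase i, |g j| * |⟪v i, v j⟫| := by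
    have : g i * ‖v i‖ ^ 2 = -∑ j ∈ Finset.univ.erase i, g j * ⟪v i, v j⟫ := by
      rw [← hnormsq]; linarith
    calc |g i| * ‖v i‖ ^ 2 = |g i * ‖v i‖ ^ 2| := by
          rw [abs_mul, abs_of_nonneg (by positivity : (0:ℝ) ≤ ‖v i‖ ^ 2)]
      _ = |∑ j ∈ Finset.univ.erase i, g j * ⟪v i, v j⟫| := by rw [this, abs_neg]
      _ ≤ ∑ j ∈ Finset.univ.erase i, |g j * ⟪v i, v j⟫| := Finset.abs_sum_le_sum_abs _ _
      _ = ∑ j ∈ Finset.univ.erase i, |g j| * |⟪v i, v j⟫| := by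
          simp [abs_mul]
  have hbound : ∑ j ∈ Finset.univ.erase i, |g j| * |⟪v i, v j⟫|
      ≤ ((m : ℝ) - 1) * (|g i| * (R * Real.sqrt (R ^ 2 - δ ^ 2))) := by
    have hcard : ((Finset.univ.erase i).card : ℝ) = (m : ℝ) - 1 := by
      rw [Finset.card_erase_of_mem (Finset.mem_univ i)]
      simp
      rw [Nat.cast_sub (Nat.one_le_iff_ne_zero.mpr (by
        intro h; exact absurd (h ▸ i).pos (by simp [h])))]
      simp
    calc ∑ j ∈ Finset.univ.erase i, |g j| * |⟪v i, v j⟫|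
        ≤ ∑ j ∈ Finset.univ.erase i, |g i| * (R * Real.sqrt (R ^ 2 - δ ^ 2)) := by
          apply Finset.sum_le_sum
          intro j hj
          have hjne : j ≠ i := Finset.ne_of_mem_erase hj
          exact mul_le_mul (hi j (Finset.mem_univ j)) (key j hjne) (abs_nonneg _)
            (abs_nonneg _)
      _ = ((m : ℝ) - 1) * (|g i| * (R * Real.sqrt (R ^ 2 - δ ^ 2))) := by
          rw [Finset.sum_const, nsmul_eq_mul, hcard]
  have hfin : |g i| * r ^ 2 ≤ ((m : ℝ) - 1) * (|g i| * (R * Real.sqrt (R ^ 2 - δ ^ 2))) := by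
    have h1 : |g i| * r ^ 2 ≤ |g i| * ‖v i‖ ^ 2 := by
      apply mul_le_mul_of_nonneg_left _ (abs_nonneg _)
      have := hlow i; nlinarith
    linarith
  nlinarith [hfin, hgi, hcond]
end

section
/- Let H be a real inner product space, m ∈ ℕ, and v : Fin m → H a family of vectors with 0 < r ≤ ‖v i‖ ≤ R for all i. If the dictionary is γ-coherent, i.e., for all i ≠ j we have |⟪v i, v j⟫| ≤ γ · ‖v i‖ · ‖v j‖ (with γ ≥ 0), and if (m−1)·γ·R² < r², then the family (v i) is linearly independent. -/
open scoped RealInnerProductSpace BigOperators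

/-- Linear independence of a γ-coherent dictionary. -/
theorem linearIndependent_of_coherent
    {H : Type*} [NormedAddCommGroup H] [InnerProductSpace ℝ H]
    {m : ℕ} (v : Fin m → H) (r R γ : ℝ)
    (hr : 0 < r) (hγ : 0 ≤ γ)
    (hlow : ∀ i, r ≤ ‖v i‖) (hup : ∀ i, ‖v i‖ ≤ R)
    (hcoh : ∀ i j, i ≠ j → |⟪v i, v j⟫| ≤ γ * ‖v i‖ * ‖v j‖)
    (hcond : ((m : ℝ) - 1) * γ * R ^ 2 < r ^ 2) :
    LinearIndependent ℝ v := by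
  rw [Fintype.linearIndependent_iff]
  intro g hsum
  by_contra h
  push_neg at h
  obtain ⟨k, hk⟩ := h
  have hne : (Finset.univ : Finset (Fin m)).Nonempty := ⟨k, Finset.mem_univ k⟩
  obtain ⟨i, -, hi⟩ := Finset.exists_max_image Finset.univ (fun j => |g j|) hne
  have hgi : 0 < |g i| := lt_of_lt_of_le (abs_pos.2 hk) (hi k (Finset.mem_univ k))
  have hR : 0 ≤ R := le_trans hr.le (le_trans (hlow i) (hup i))
  have h0 : ∑ j, g j * ⟪v j, v i⟫ = 0 := by
    have := congrArg (fun x => ⟪x, v i⟫) hsum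
    simpa [sum_inner, real_inner_smul_left] using this
  rw [← Finset.add_sum_erase _ _ (Finset.mem_univ i)] at h0
  have key : g i * ⟪v i, v i⟫ = - ∑ j ∈ Finset.univ.erase i, g j * ⟪v j, v i⟫ :=
    eq_neg_of_add_eq_zero_left h0
  have hb : |g i| * r ^ 2 ≤ ((m : ℝ) - 1) * (γ * R ^ 2 * |g i|) := by
    have h1 : |g i| * r ^ 2 ≤ |g i * ⟪v i, v i⟫| := by
      rw [abs_mul, real_inner_self_eq_norm_sq, abs_of_nonneg (sq_nonneg ‖v i‖)]
      exact mul_le_mul_of_nonneg_left (pow_le_pow_left₀ hr.le (hlow i) 2) (abs_nonneg _)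
    have h2 : |∑ j ∈ Finset.univ.erase i, g j * ⟪v j, v i⟫|
        ≤ ∑ j ∈ Finset.univ.erase i, |g j * ⟪v j, v i⟫| :=
      Finset.abs_sum_le_sum_abs _ _
    have h3 : ∑ j ∈ Finset.univ.erase i, |g j * ⟪v j, v i⟫|
        ≤ ∑ _j ∈ Finset.univ.erase i, γ * R ^ 2 * |g i| := by
      apply Finset.sum_le_sum
      intro j hj
      have hji : j ≠ i := Finset.ne_of_mem_erase hj
      have hcohji := hcoh j i hji
      have hgj : |g j| ≤ |g i| := hi j (Finset.mem_univ j)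
      have hj1 := hlow j
      have hj2 := hup j
      have hi2 := hup i
      have hi1 := hlow i
      rw [abs_mul]
      calc |g j| * |⟪v j, v i⟫| ≤ |g i| * (γ * ‖v j‖ * ‖v i‖) := by
            apply mul_le_mul hgj hcohji (abs_nonneg _) (abs_nonneg _)
        _ ≤ γ * R ^ 2 * |g i| := by
            have hmm : ‖v j‖ * ‖v i‖ ≤ R * R :=
              mul_le_mul hj2 hi2 (le_trans hr.le hi1) hR
            nlinarith [mul_nonneg hγ (abs_nonneg (g i))]
    have hcard : ((Finset.univ.erase i).card : ℝ) = (m : ℝ) - 1 := by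
      rw [Finset.card_erase_of_mem (Finset.mem_univ i), Finset.card_univ,
        Fintype.card_fin, Nat.cast_sub i.pos, Nat.cast_one]
    calc |g i| * r ^ 2 ≤ |g i * ⟪v i, v i⟫| := h1
      _ = |∑ j ∈ Finset.univ.erase i, g j * ⟪v j, v i⟫| := by rw [key, abs_neg]
      _ ≤ ∑ _j ∈ Finset.univ.erase i, γ * R ^ 2 * |g i| := le_trans h2 h3
      _ = ((m : ℝ) - 1) * (γ * R ^ 2 * |g i|) := by
          rw [Finset.sum_const, nsmul_eq_mul, hcard]
  nlinarith [hgi]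
end

section
/- Let H be a real inner product space, m ∈ ℕ, and v : Fin m → H a family of vectors with 0 < r ≤ ‖v i‖ for all i. If the dictionary has Babel measure at most γ, i.e., for every index i we have ∑_{j ≠ i} |⟪v i, v j⟫| ≤ γ (with γ ≥ 0), and if γ < r², then the family (v i) is linearly independent. -/
open scoped RealInnerProductSpace BigOperators

/-- Linear independence of a γ-Babel dictionary. -/
theorem linearIndependent_of_babel
    {H : Type*} [NormedAddCommGroup H] [InnerProductSpace ℝ H]
    {m : ℕ} (v : Fin m → H) (r γ : ℝ)
    (hr : 0 < r) (hγ : 0 ≤ γ)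
    (hlow : ∀ i, r ≤ ‖v i‖)
    (hbabel : ∀ i, ∑ j ∈ Finset.univ.erase i, |⟪v i, v j⟫| ≤ γ)
    (hcond : γ < r ^ 2) :
    LinearIndependent ℝ v := by
  rw [Fintype.linearIndependent_iff]
  intro g hg j
  -- pick i maximizing |g i|
  obtain ⟨i, -, hi⟩ := Finset.exists_max_image Finset.univ (fun k => |g k|)
    ⟨j, Finset.mem_univ j⟩
  have hi' : ∀ k, |g k| ≤ |g i| := fun k => hi k (Finset.mem_univ k)
  -- inner product with v i
  have h0 : ∑ k, g k * ⟪v i, v k⟫ = 0 := by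
    have := congrArg (fun x => ⟪v i, x⟫) hg
    simpa [inner_sum, real_inner_smul_right, mul_comm] using this
  have hsplit : g i * ⟪v i, v i⟫ = -∑ k ∈ Finset.univ.erase i, g k * ⟪v i, v k⟫ := by
    have := Finset.add_sum_erase Finset.univ (fun k => g k * ⟪v i, v k⟫)
      (Finset.mem_univ i)
    linarith
  have hnorm : |g i| * ‖v i‖ ^ 2 ≤ |g i| * γ := by
    have : |g i| * ‖v i‖ ^ 2 = |g i * ⟪v i, v i⟫| := by
      rw [abs_mul, abs_of_nonneg real_inner_self_nonneg, real_inner_self_eq_norm_sq]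
    rw [this, hsplit, abs_neg]
    calc |∑ k ∈ Finset.univ.erase i, g k * ⟪v i, v k⟫|
        ≤ ∑ k ∈ Finset.univ.erase i, |g k * ⟪v i, v k⟫| := Finset.abs_sum_le_sum_abs _ _
      _ ≤ ∑ k ∈ Finset.univ.erase i, |g i| * |⟪v i, v k⟫| := by
          apply Finset.sum_le_sum
          intro k _
          rw [abs_mul]
          exact mul_le_mul_of_nonneg_right (hi' k) (abs_nonneg _)
      _ = |g i| * ∑ k ∈ Finset.univ.erase i, |⟪v i, v k⟫| := by rw [Finset.mul_sum]
      _ ≤ |g i| * γ := mul_le_mul_of_nonneg_left (hbabel i) (abs_nonneg _)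
  have hr2 : |g i| * r ^ 2 ≤ |g i| * ‖v i‖ ^ 2 := by
    apply mul_le_mul_of_nonneg_left _ (abs_nonneg _)
    exact pow_le_pow_left₀ hr.le (hlow i) 2
  have hgi : |g i| = 0 := by
    by_contra h
    have hpos : 0 < |g i| := lt_of_le_of_ne (abs_nonneg _) (Ne.symm h)
    nlinarith
  have := hi' j
  rw [hgi] at this
  exact abs_eq_zero.mp (le_antisymm this (abs_nonneg _))
end

section
/- Let H be a real inner product space, m ∈ ℕ, v : Fin m → H a family of vectors with 0 < r ≤ ‖v i‖ ≤ R for all i, and K the Gram matrix with entries K i j = ⟪v i, v j⟫. Suppose the dictionary is δ-distant, i.e., for all i ≠ j, ‖v i‖² − ⟪v i, v j⟫² / ‖v j‖² ≥ δ² (with δ ≥ 0), and suppose (m−1)·R·√(R² − δ²) < r². Then for any two eigenvalues λ and μ of the symmetric matrix K, one has λ ≤ ((R² + (m−1)·R·√(R² − δ²)) / (r² − (m−1)·R·√(R² − δ²))) · μ; in particular the ℓ₂ condition number λ_max/λ_min of K is at most (R² + (m−1)·R·√(R² − δ²)) / (r² − (m−1)·R·√(R² − δ²)). -/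
open scoped RealInnerProductSpace BigOperators

/-- Condition-number bound for the Gram matrix of a δ-distant dictionary:
any two eigenvalues λ, μ satisfy λ ≤ C · μ with
C = (R² + (m−1)·R·√(R² − δ²)) / (r² − (m−1)·R·√(R² − δ²)). -/
theorem gram_condition_number_distant
    {H : Type*} [NormedAddCommGroup H] [InnerProductSpace ℝ H]
    {m : ℕ} (v : Fin m → H) (r R δ : ℝ)
    (hr : 0 < r) (hδ : 0 ≤ δ)
    (hlow : ∀ i, r ≤ ‖v i‖) (hup : ∀ i, ‖v i‖ ≤ R)
    (hdist : ∀ i j, i ≠ j → δ ^ 2 ≤ ‖v i‖ ^ 2 - ⟪v i, v j⟫ ^ 2 / ‖v j‖ ^ 2)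
    (hcond : ((m : ℝ) - 1) * R * Real.sqrt (R ^ 2 - δ ^ 2) < r ^ 2)
    (K : Matrix (Fin m) (Fin m) ℝ) (hK : ∀ i j, K i j = ⟪v i, v j⟫)
    (lam mu : ℝ)
    (hlam : ∃ x : Fin m → ℝ, x ≠ 0 ∧ K.mulVec x = lam • x)
    (hmu : ∃ x : Fin m → ℝ, x ≠ 0 ∧ K.mulVec x = mu • x) :
    lam ≤ (R ^ 2 + ((m : ℝ) - 1) * R * Real.sqrt (R ^ 2 - δ ^ 2)) /
          (r ^ 2 - ((m : ℝ) - 1) * R * Real.sqrt (R ^ 2 - δ ^ 2)) * mu := by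
  set S : ℝ := ((m : ℝ) - 1) * R * Real.sqrt (R ^ 2 - δ ^ 2) with hS
  -- m ≥ 1
  rcases hlam with ⟨x, hx0, hx⟩
  rcases hmu with ⟨y, hy0, hy⟩
  have hm : 0 < m := by
    rcases Nat.eq_zero_or_pos m with h | h
    · exfalso; apply hx0; ext i; exact absurd i.2 (by omega)
    · exact h
  have hR : 0 < R := lt_of_lt_of_le hr ((hlow ⟨0, hm⟩).trans (hup ⟨0, hm⟩))
  have hS0 : 0 ≤ S := by
    apply mul_nonneg (mul_nonneg ?_ hR.le) (Real.sqrt_nonneg _)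
    have : (1 : ℝ) ≤ (m : ℝ) := by exact_mod_cast hm
    linarith
  -- off-diagonal bound
  have hoff : ∀ i j : Fin m, i ≠ j → |K i j| ≤ R * Real.sqrt (R ^ 2 - δ ^ 2) := by
    intro i j hij
    have hBj : 0 < ‖v j‖ := lt_of_lt_of_le hr (hlow j)
    have hd := hdist i j hij
    have h1 : ⟪v i, v j⟫ ^ 2 / ‖v j‖ ^ 2 ≤ R ^ 2 - δ ^ 2 := by
      have : ‖v i‖ ^ 2 ≤ R ^ 2 := by
        have := hup i; nlinarith [hlow i]
      linarith
    have hRδ : 0 ≤ R ^ 2 - δ ^ 2 := le_trans (by positivity) h1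
    have h2 : ⟪v i, v j⟫ ^ 2 ≤ (R ^ 2 - δ ^ 2) * R ^ 2 := by
      have hB2 : ‖v j‖ ^ 2 ≤ R ^ 2 := by nlinarith [hup j, hlow j]
      have := (div_le_iff₀ (by positivity : (0:ℝ) < ‖v j‖ ^ 2)).mp h1
      nlinarith
    have : |K i j| = Real.sqrt (K i j ^ 2) := (Real.sqrt_sq_eq_abs _).symm
    rw [this, hK]
    calc Real.sqrt (⟪v i, v j⟫ ^ 2) ≤ Real.sqrt ((R ^ 2 - δ ^ 2) * R ^ 2) :=
          Real.sqrt_le_sqrt h2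
      _ = Real.sqrt (R ^ 2 - δ ^ 2) * R := by
          rw [Real.sqrt_mul hRδ, Real.sqrt_sq hR.le]
      _ = R * Real.sqrt (R ^ 2 - δ ^ 2) := mul_comm _ _
  -- Gershgorin: any eigenvalue t lies in [r² − S, R² + S]
  have gersh : ∀ t : ℝ, ∀ z : Fin m → ℝ, z ≠ 0 → K.mulVec z = t • z →
      r ^ 2 - S ≤ t ∧ t ≤ R ^ 2 + S := by
    intro t z hz0 hz
    have hev : Module.End.HasEigenvalue (Matrix.toLin' K) t := by
      apply Module.End.hasEigenvalue_of_hasEigenvector (x := z)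
      constructor
      · rw [Module.End.mem_eigenspace_iff, Matrix.toLin'_apply, hz]
      · exact hz0
    obtain ⟨k, hk⟩ := eigenvalue_mem_ball hev
    rw [Metric.mem_closedBall, Real.dist_eq] at hk
    have hsum : ∑ j ∈ Finset.univ.erase k, ‖K k j‖ ≤ S := by
      calc ∑ j ∈ Finset.univ.erase k, ‖K k j‖
          ≤ ∑ _j ∈ Finset.univ.erase k, R * Real.sqrt (R ^ 2 - δ ^ 2) := by
            apply Finset.sum_le_sum
            intro j hj
            exact hoff k j (Ne.symm (Finset.ne_of_mem_erase hj))
        _ = ((m : ℝ) - 1) * (R * Real.sqrt (R ^ 2 - δ ^ 2)) := by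
            rw [Finset.sum_const, nsmul_eq_mul]
            congr 1
            rw [Finset.card_erase_of_mem (Finset.mem_univ k), Finset.card_univ,
              Fintype.card_fin]
            rw [Nat.cast_sub hm]; simp
        _ = S := by rw [hS]; ring
    have hdiag : K k k = ‖v k‖ ^ 2 := by
      rw [hK, real_inner_self_eq_norm_sq]
    have h1 : r ^ 2 ≤ K k k := by rw [hdiag]; nlinarith [hlow k]
    have h2 : K k k ≤ R ^ 2 := by rw [hdiag]; nlinarith [hup k, hlow k]
    constructor
    · nlinarith [abs_le.mp (hk.trans hsum)]
    · nlinarith [abs_le.mp (hk.trans hsum)]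
  obtain ⟨hl1, hl2⟩ := gersh lam x hx0 hx
  obtain ⟨hm1, hm2⟩ := gersh mu y hy0 hy
  have hpos : 0 < r ^ 2 - S := by linarith
  have hCpos : 0 ≤ (R ^ 2 + S) / (r ^ 2 - S) := by positivity
  calc lam ≤ R ^ 2 + S := hl2
    _ = (R ^ 2 + S) / (r ^ 2 - S) * (r ^ 2 - S) := by field_simp
    _ ≤ (R ^ 2 + S) / (r ^ 2 - S) * mu := by
        apply mul_le_mul_of_nonneg_left hm1 hCpos
end

section
/- Let H be a real inner product space, m ∈ ℕ, v : Fin m → H a family of vectors with 0 < r ≤ ‖v i‖ ≤ R for all i, and K the Gram matrix with entries K i j = ⟪v i, v j⟫. Suppose the dictionary is γ-coherent, i.e., for all i ≠ j, |⟪v i, v j⟫| ≤ γ · ‖v i‖ · ‖v j‖ (with γ ≥ 0), and suppose (m−1)·γ·R² < r². Then for any two eigenvalues λ and μ of the symmetric matrix K, one has λ ≤ ((R² + (m−1)·γ·R²) / (r² − (m−1)·γ·R²)) · μ; in particular the ℓ₂ condition number λ_max/λ_min of K is at most (R² + (m−1)·γ·R²) / (r² − (m−1)·γ·R²). -/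
open scoped RealInnerProductSpace BigOperators

lemma gram_eigenvalue_bounds
    {H : Type*} [NormedAddCommGroup H] [InnerProductSpace ℝ H]
    {m : ℕ} (v : Fin m → H) (r R γ : ℝ)
    (hr : 0 < r) (hγ : 0 ≤ γ)
    (hlow : ∀ i, r ≤ ‖v i‖) (hup : ∀ i, ‖v i‖ ≤ R)
    (hcoh : ∀ i j, i ≠ j → |⟪v i, v j⟫| ≤ γ * ‖v i‖ * ‖v j‖)
    (K : Matrix (Fin m) (Fin m) ℝ) (hK : ∀ i j, K i j = ⟪v i, v j⟫)
    (lam : ℝ)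
    (hlam : ∃ x : Fin m → ℝ, x ≠ 0 ∧ K.mulVec x = lam • x) :
    r ^ 2 - ((m : ℝ) - 1) * γ * R ^ 2 ≤ lam ∧
      lam ≤ R ^ 2 + ((m : ℝ) - 1) * γ * R ^ 2 := by
  obtain ⟨x, hx, hxe⟩ := hlam
  have hev : Module.End.HasEigenvalue (Matrix.toLin' K) lam :=
    Module.End.hasEigenvalue_of_hasEigenvector
      ⟨Module.End.mem_eigenspace_iff.mpr (by simpa using hxe), hx⟩
  obtain ⟨k, hk⟩ := eigenvalue_mem_ball hev
  rw [Metric.mem_closedBall, Real.dist_eq] at hk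
  have hm : 1 ≤ m := by
    rcases Nat.eq_zero_or_pos m with h | h
    · exact absurd (funext fun i => absurd i.2 (by omega)) hx
    · exact h
  have hdiag : K k k = ‖v k‖ ^ 2 := by
    rw [hK, real_inner_self_eq_norm_sq]
  have hrR : r ≤ R := (hlow k).trans (hup k)
  have hR0 : 0 < R := lt_of_lt_of_le hr hrR
  have hsum : ∑ j ∈ Finset.univ.erase k, ‖K k j‖ ≤ ((m : ℝ) - 1) * γ * R ^ 2 := by
    calc ∑ j ∈ Finset.univ.erase k, ‖K k j‖
        ≤ ∑ j ∈ Finset.univ.erase k, γ * R ^ 2 := by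
          refine Finset.sum_le_sum fun j hj => ?_
          have hjk : k ≠ j := (Finset.ne_of_mem_erase hj).symm
          have h1 : |⟪v k, v j⟫| ≤ γ * ‖v k‖ * ‖v j‖ := hcoh k j hjk
          have h2 : γ * ‖v k‖ * ‖v j‖ ≤ γ * R * R := by
            have := hup k
            have := hup j
            have h0k : (0:ℝ) ≤ ‖v k‖ := norm_nonneg _
            have h0j : (0:ℝ) ≤ ‖v j‖ := norm_nonneg _
            nlinarith [mul_le_mul (hup k) (hup j) h0j hR0.le]
          rw [hK, Real.norm_eq_abs]
          nlinarith
        _ = ((m : ℝ) - 1) * (γ * R ^ 2) := by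
          rw [Finset.sum_const, Finset.card_erase_of_mem (Finset.mem_univ k)]
          simp [Nat.cast_sub hm]
        _ = ((m : ℝ) - 1) * γ * R ^ 2 := by ring
  have hd1 : r ^ 2 ≤ K k k := by
    rw [hdiag]; exact pow_le_pow_left₀ hr.le (hlow k) 2
  have hd2 : K k k ≤ R ^ 2 := by
    rw [hdiag]; exact pow_le_pow_left₀ (norm_nonneg _) (hup k) 2
  have habs := abs_le.mp hk
  constructor <;> nlinarith [habs.1, habs.2]

/-- Condition-number bound for the Gram matrix of a γ-coherent dictionary:
any two eigenvalues λ, μ satisfy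
λ ≤ ((R² + (m−1)·γ·R²) / (r² − (m−1)·γ·R²)) · μ. -/
theorem gram_condition_number_coherent
    {H : Type*} [NormedAddCommGroup H] [InnerProductSpace ℝ H]
    {m : ℕ} (v : Fin m → H) (r R γ : ℝ)
    (hr : 0 < r) (hγ : 0 ≤ γ)
    (hlow : ∀ i, r ≤ ‖v i‖) (hup : ∀ i, ‖v i‖ ≤ R)
    (hcoh : ∀ i j, i ≠ j → |⟪v i, v j⟫| ≤ γ * ‖v i‖ * ‖v j‖)
    (hcond : ((m : ℝ) - 1) * γ * R ^ 2 < r ^ 2)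
    (K : Matrix (Fin m) (Fin m) ℝ) (hK : ∀ i j, K i j = ⟪v i, v j⟫)
    (lam mu : ℝ)
    (hlam : ∃ x : Fin m → ℝ, x ≠ 0 ∧ K.mulVec x = lam • x)
    (hmu : ∃ x : Fin m → ℝ, x ≠ 0 ∧ K.mulVec x = mu • x) :
    lam ≤ (R ^ 2 + ((m : ℝ) - 1) * γ * R ^ 2) /
          (r ^ 2 - ((m : ℝ) - 1) * γ * R ^ 2) * mu := by
  obtain ⟨-, hlam2⟩ := gram_eigenvalue_bounds v r R γ hr hγ hlow hup hcoh K hK lam hlam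
  obtain ⟨hmu1, hmu2⟩ := gram_eigenvalue_bounds v r R γ hr hγ hlow hup hcoh K hK mu hmu
  set c := ((m : ℝ) - 1) * γ * R ^ 2 with hc
  have hB : 0 < r ^ 2 - c := by linarith
  have hA : 0 < R ^ 2 + c := by linarith
  rw [div_mul_eq_mul_div, le_div_iff₀ hB]
  nlinarith
end

section
/- Let H be a real inner product space, m ∈ ℕ, v : Fin m → H a family of vectors with 0 < r ≤ ‖v i‖ ≤ R for all i, and K the Gram matrix with entries K i j = ⟪v i, v j⟫. Suppose the dictionary has Babel measure at most γ, i.e., for every index i, ∑_{j ≠ i} |⟪v i, v j⟫| ≤ γ (with γ ≥ 0), and suppose γ < r². Then for any two eigenvalues λ and μ of the symmetric matrix K, one has λ ≤ ((R² + γ) / (r² − γ)) · μ; in particular the ℓ₂ condition number λ_max/λ_min of K is at most (R² + γ) / (r² − γ). -/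
open scoped RealInnerProductSpace BigOperators

/-- Condition-number bound for the Gram matrix of a γ-Babel dictionary:
any two eigenvalues λ, μ satisfy λ ≤ ((R² + γ) / (r² − γ)) · μ. -/
theorem gram_condition_number_babel
    {H : Type*} [NormedAddCommGroup H] [InnerProductSpace ℝ H]
    {m : ℕ} (v : Fin m → H) (r R γ : ℝ)
    (hr : 0 < r) (hγ : 0 ≤ γ)
    (hlow : ∀ i, r ≤ ‖v i‖) (hup : ∀ i, ‖v i‖ ≤ R)
    (hbabel : ∀ i, ∑ j ∈ Finset.univ.erase i, |⟪v i, v j⟫| ≤ γ)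
    (hcond : γ < r ^ 2)
    (K : Matrix (Fin m) (Fin m) ℝ) (hK : ∀ i j, K i j = ⟪v i, v j⟫)
    (lam mu : ℝ)
    (hlam : ∃ x : Fin m → ℝ, x ≠ 0 ∧ K.mulVec x = lam • x)
    (hmu : ∃ x : Fin m → ℝ, x ≠ 0 ∧ K.mulVec x = mu • x) :
    lam ≤ (R ^ 2 + γ) / (r ^ 2 - γ) * mu := by
  have key : ∀ l : ℝ, (∃ x : Fin m → ℝ, x ≠ 0 ∧ K.mulVec x = l • x) →
      r ^ 2 - γ ≤ l ∧ l ≤ R ^ 2 + γ := by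
    rintro l ⟨x, hx, hxe⟩
    have hne : Nonempty (Fin m) := by
      by_contra h
      exact hx (funext fun j => absurd ⟨j⟩ h)
    obtain ⟨i, -, hi⟩ := Finset.exists_max_image Finset.univ (fun j => |x j|)
      ⟨Classical.arbitrary _, Finset.mem_univ _⟩
    have hi' : ∀ j, |x j| ≤ |x i| := fun j => hi j (Finset.mem_univ j)
    have hxi : 0 < |x i| := by
      rcases (abs_nonneg (x i)).lt_or_eq with h | h
      · exact h
      · exfalso; apply hx; funext j
        have h2 := hi' j
        rw [← h] at h2
        exact abs_eq_zero.mp (le_antisymm h2 (abs_nonneg _))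
    have heq : ∑ j, K i j * x j = l * x i := by
      have := congrFun hxe i
      simpa [Matrix.mulVec, dotProduct] using this
    have hsum : K i i * x i + ∑ j ∈ Finset.univ.erase i, K i j * x j
        = ∑ j, K i j * x j := Finset.add_sum_erase Finset.univ (fun j => K i j * x j) (Finset.mem_univ i)
    have hsplit : (l - K i i) * x i = ∑ j ∈ Finset.univ.erase i, K i j * x j := by
      have : (l - K i i) * x i = l * x i - K i i * x i := by ring
      rw [this, ← heq, ← hsum]; ring
    have habs : |l - K i i| * |x i| ≤ γ * |x i| := by
      rw [← abs_mul, hsplit]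
      calc |∑ j ∈ Finset.univ.erase i, K i j * x j|
          ≤ ∑ j ∈ Finset.univ.erase i, |K i j * x j| := Finset.abs_sum_le_sum_abs _ _
        _ ≤ ∑ j ∈ Finset.univ.erase i, |K i j| * |x i| := by
            apply Finset.sum_le_sum
            intro j _
            rw [abs_mul]
            exact mul_le_mul_of_nonneg_left (hi' j) (abs_nonneg _)
        _ = (∑ j ∈ Finset.univ.erase i, |K i j|) * |x i| := by
            rw [Finset.sum_mul]
        _ ≤ γ * |x i| := by
            apply mul_le_mul_of_nonneg_right _ (le_of_lt hxi)
            calc ∑ j ∈ Finset.univ.erase i, |K i j|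
                = ∑ j ∈ Finset.univ.erase i, |⟪v i, v j⟫| := by
                  apply Finset.sum_congr rfl; intro j _; rw [hK]
              _ ≤ γ := hbabel i
    have habs2 : |l - K i i| ≤ γ := le_of_mul_le_mul_right habs hxi
    have hdiag : K i i = ‖v i‖ ^ 2 := by
      rw [hK, real_inner_self_eq_norm_sq]
    have h1 : r ^ 2 ≤ K i i := by
      rw [hdiag]
      exact pow_le_pow_left₀ (le_of_lt hr) (hlow i) 2
    have h2 : K i i ≤ R ^ 2 := by
      rw [hdiag]
      exact pow_le_pow_left₀ (norm_nonneg _) (hup i) 2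
    have := abs_le.mp habs2
    constructor <;> linarith [this.1, this.2]
  obtain ⟨hl1, hl2⟩ := key lam hlam
  obtain ⟨hm1, hm2⟩ := key mu hmu
  have hpos : 0 < r ^ 2 - γ := by linarith
  rw [div_mul_eq_mul_div, le_div_iff₀ hpos]
  nlinarith [sq_nonneg R, mul_le_mul_of_nonneg_left hm1 (by positivity : (0:ℝ) ≤ R ^ 2 + γ)]
end

section
/- Let H be a real inner product space, m ∈ ℕ, and v : Fin m → H a family of vectors with 0 < r ≤ ‖v i‖ ≤ R for all i. Suppose the dictionary is δ-distant, i.e., for all i ≠ j, ‖v i‖² − ⟪v i, v j⟫² / ‖v j‖² ≥ δ² (with δ ≥ 0). Then for every coefficient vector α : Fin m → ℝ, (r² − (m−1)·R·√(R² − δ²)) · ‖α‖² ≤ ‖∑_j α j • v j‖² ≤ (R² + (m−1)·R·√(R² − δ²)) · ‖α‖², where ‖α‖² = ∑_j (α j)². (Quasi-isometry between the dual space ℝ^m and the span of the dictionary, for the distance measure.) -/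
open scoped RealInnerProductSpace BigOperators
open Finset

/-- Quasi-isometry between the dual space ℝ^m and the span of a δ-distant
dictionary. -/
theorem quasi_isometry_distant
    {H : Type*} [NormedAddCommGroup H] [InnerProductSpace ℝ H]
    {m : ℕ} (v : Fin m → H) (r R δ : ℝ)
    (hr : 0 < r) (hδ : 0 ≤ δ)
    (hlow : ∀ i, r ≤ ‖v i‖) (hup : ∀ i, ‖v i‖ ≤ R)
    (hdist : ∀ i j, i ≠ j → δ ^ 2 ≤ ‖v i‖ ^ 2 - ⟪v i, v j⟫ ^ 2 / ‖v j‖ ^ 2)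
    (α : Fin m → ℝ) :
    (r ^ 2 - ((m : ℝ) - 1) * R * Real.sqrt (R ^ 2 - δ ^ 2)) * ∑ j, (α j) ^ 2 ≤
      ‖∑ j, α j • v j‖ ^ 2 ∧
    ‖∑ j, α j • v j‖ ^ 2 ≤
      (R ^ 2 + ((m : ℝ) - 1) * R * Real.sqrt (R ^ 2 - δ ^ 2)) * ∑ j, (α j) ^ 2 := by
  set S := ∑ j, (α j) ^ 2 with hS
  set C := R * Real.sqrt (R ^ 2 - δ ^ 2) with hC
  have key : ∀ i j, i ≠ j → |⟪v i, v j⟫| ≤ C := by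
    intro i j hij
    have hRpos : 0 < R := lt_of_lt_of_le hr ((hlow i).trans (hup i))
    have hvj : (0:ℝ) < ‖v j‖ := lt_of_lt_of_le hr (hlow j)
    have h2 := hdist i j hij
    have hnn : 0 ≤ ⟪v i, v j⟫ ^ 2 / ‖v j‖ ^ 2 := by positivity
    have hRi : ‖v i‖ ^ 2 ≤ R ^ 2 := by nlinarith [hlow i, hup i]
    have hRj : ‖v j‖ ^ 2 ≤ R ^ 2 := by nlinarith [hlow j, hup j]
    have hRδ : δ ^ 2 ≤ R ^ 2 := by linarith
    have h1 : ⟪v i, v j⟫ ^ 2 ≤ (R ^ 2 - δ ^ 2) * R ^ 2 := by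
      have h3 : ⟪v i, v j⟫ ^ 2 / ‖v j‖ ^ 2 ≤ R ^ 2 - δ ^ 2 := by linarith
      calc ⟪v i, v j⟫ ^ 2 = (⟪v i, v j⟫ ^ 2 / ‖v j‖ ^ 2) * ‖v j‖ ^ 2 := by
            field_simp
        _ ≤ (R ^ 2 - δ ^ 2) * R ^ 2 := mul_le_mul h3 hRj (by positivity) (by linarith)
    have : |⟪v i, v j⟫| = Real.sqrt (⟪v i, v j⟫ ^ 2) := (Real.sqrt_sq_eq_abs _).symm
    rw [this, hC]
    have : Real.sqrt (⟪v i, v j⟫ ^ 2) ≤ Real.sqrt ((R ^ 2 - δ ^ 2) * R ^ 2) :=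
      Real.sqrt_le_sqrt h1
    calc Real.sqrt (⟪v i, v j⟫ ^ 2) ≤ Real.sqrt ((R ^ 2 - δ ^ 2) * R ^ 2) := this
      _ = Real.sqrt (R ^ 2 - δ ^ 2) * R := by
          rw [Real.sqrt_mul (by linarith), Real.sqrt_sq hRpos.le]
      _ = R * Real.sqrt (R ^ 2 - δ ^ 2) := mul_comm _ _
  have term : ∀ i j : Fin m, i ≠ j →
      |α i * α j * ⟪v i, v j⟫| ≤ C * ((α i ^ 2 + α j ^ 2) / 2) := by
    intro i j hij
    have hk := key i j hij
    have hC0 : 0 ≤ C := le_trans (abs_nonneg _) hk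
    calc |α i * α j * ⟪v i, v j⟫| = |α i * α j| * |⟪v i, v j⟫| := abs_mul _ _
      _ ≤ |α i * α j| * C := mul_le_mul_of_nonneg_left hk (abs_nonneg _)
      _ ≤ ((α i ^ 2 + α j ^ 2) / 2) * C := by
          apply mul_le_mul_of_nonneg_right _ hC0
          rw [abs_mul]
          nlinarith [sq_nonneg (|α i| - |α j|), sq_abs (α i), sq_abs (α j)]
      _ = C * ((α i ^ 2 + α j ^ 2) / 2) := mul_comm _ _
  have expand : ‖∑ j, α j • v j‖ ^ 2 =
      (∑ i, (α i) ^ 2 * ‖v i‖ ^ 2) +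
        ∑ i, ∑ j ∈ univ.erase i, α i * α j * ⟪v i, v j⟫ := by
    have h1 : ‖∑ j, α j • v j‖ ^ 2 = ∑ i, ∑ j, α i * α j * ⟪v i, v j⟫ := by
      rw [← real_inner_self_eq_norm_sq, sum_inner]
      refine Finset.sum_congr rfl fun i _ => ?_
      rw [real_inner_smul_left, inner_sum]
      rw [Finset.mul_sum]
      refine Finset.sum_congr rfl fun j _ => ?_
      rw [real_inner_smul_right]; ring
    rw [h1]
    rw [← Finset.sum_add_distrib]
    refine Finset.sum_congr rfl fun i _ => ?_
    rw [← Finset.add_sum_erase _ _ (mem_univ i)]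
    congr 1
    rw [real_inner_self_eq_norm_sq]; ring
  have hsum : ∑ i, ∑ j ∈ univ.erase i, (C * ((α i ^ 2 + α j ^ 2) / 2)) =
      C * (((m : ℝ) - 1) * S) := by
    rcases Nat.eq_zero_or_pos m with hm | hm
    · subst hm; simp [hS]
    have hinner : ∀ i : Fin m, ∑ j ∈ univ.erase i, (C * ((α i ^ 2 + α j ^ 2) / 2)) =
        C * ((((m : ℝ) - 1) * α i ^ 2 + (S - α i ^ 2)) / 2) := by
      intro i
      rw [← Finset.mul_sum]
      congr 1
      rw [← Finset.sum_div]
      congr 1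
      rw [Finset.sum_add_distrib, Finset.sum_const, Finset.card_erase_of_mem (mem_univ i),
        Finset.sum_erase_eq_sub (mem_univ i), card_univ, Fintype.card_fin,
        nsmul_eq_mul, Nat.cast_sub hm]
      push_cast
      rw [hS]
    rw [Finset.sum_congr rfl fun i _ => hinner i, ← Finset.mul_sum]
    congr 1
    rw [← Finset.sum_div, Finset.sum_add_distrib, ← Finset.mul_sum,
      Finset.sum_sub_distrib, Finset.sum_const, card_univ, Fintype.card_fin, nsmul_eq_mul]
    rw [← hS]
    ring
  have Ebound : |∑ i, ∑ j ∈ univ.erase i, α i * α j * ⟪v i, v j⟫| ≤ C * (((m : ℝ) - 1) * S) := by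
    calc |∑ i, ∑ j ∈ univ.erase i, α i * α j * ⟪v i, v j⟫|
        ≤ ∑ i, |∑ j ∈ univ.erase i, α i * α j * ⟪v i, v j⟫| := Finset.abs_sum_le_sum_abs _ _
      _ ≤ ∑ i, ∑ j ∈ univ.erase i, |α i * α j * ⟪v i, v j⟫| :=
          Finset.sum_le_sum fun i _ => Finset.abs_sum_le_sum_abs _ _
      _ ≤ ∑ i, ∑ j ∈ univ.erase i, (C * ((α i ^ 2 + α j ^ 2) / 2)) :=
          Finset.sum_le_sum fun i _ => Finset.sum_le_sum fun j hj =>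
            term i j (Finset.ne_of_mem_erase hj).symm
      _ = C * (((m : ℝ) - 1) * S) := hsum
  obtain ⟨hE1, hE2⟩ := abs_le.mp Ebound
  have Dlow : r ^ 2 * S ≤ ∑ i, (α i) ^ 2 * ‖v i‖ ^ 2 := by
    rw [hS, Finset.mul_sum]
    refine Finset.sum_le_sum fun i _ => ?_
    have h : r ^ 2 ≤ ‖v i‖ ^ 2 := by nlinarith [hlow i]
    nlinarith [sq_nonneg (α i), h]
  have Dhigh : ∑ i, (α i) ^ 2 * ‖v i‖ ^ 2 ≤ R ^ 2 * S := by
    rw [hS, Finset.mul_sum]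
    refine Finset.sum_le_sum fun i _ => ?_
    have h : ‖v i‖ ^ 2 ≤ R ^ 2 := by nlinarith [hlow i, hup i, hr]
    nlinarith [sq_nonneg (α i), h]
  simp only [hC] at hE1 hE2
  rw [expand]
  constructor
  · nlinarith [Dlow, hE1]
  · nlinarith [Dhigh, hE2]
end

section
/- Let H be a real inner product space, m ∈ ℕ, and v : Fin m → H a family of vectors with 0 < r ≤ ‖v i‖ ≤ R for all i. Suppose the dictionary is γ-coherent, i.e., for all i ≠ j, |⟪v i, v j⟫| ≤ γ · ‖v i‖ · ‖v j‖ (with γ ≥ 0). Then for every coefficient vector α : Fin m → ℝ, (r² − (m−1)·γ·R²) · ‖α‖² ≤ ‖∑_j α j • v j‖² ≤ (R² + (m−1)·γ·R²) · ‖α‖², where ‖α‖² = ∑_j (α j)². (Quasi-isometry between the dual space ℝ^m and the span of the dictionary, for the coherence measure.) -/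
open scoped RealInnerProductSpace BigOperators

lemma offdiag_abs_sum_le {m : ℕ} (α : Fin m → ℝ) :
    ∑ i, ∑ j ∈ Finset.univ.erase i, |α i * α j| ≤
      ((m : ℝ) - 1) * ∑ j, (α j) ^ 2 := by
  rcases Nat.eq_zero_or_pos m with hm | hm
  · subst hm; simp
  have hcard : ∀ i : Fin m, ((Finset.univ.erase i).card : ℝ) = (m : ℝ) - 1 := by
    intro i
    rw [Finset.card_erase_of_mem (Finset.mem_univ i)]
    simp [Nat.cast_sub hm]
  have h1 : ∀ i : Fin m, ∑ j ∈ Finset.univ.erase i, |α i * α j| ≤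
      ∑ j ∈ Finset.univ.erase i, ((α i)^2 + (α j)^2) / 2 := by
    intro i
    refine Finset.sum_le_sum fun j _ => ?_
    rw [abs_mul]
    nlinarith [sq_nonneg (|α i| - |α j|), sq_abs (α i), sq_abs (α j)]
  have hsym : ∑ i, ∑ j ∈ Finset.univ.erase i, (α j)^2
      = ∑ j : Fin m, ((m : ℝ) - 1) * (α j)^2 := by
    rw [Finset.sum_comm' (s := Finset.univ) (t := fun i => Finset.univ.erase i)
      (t' := Finset.univ) (s' := fun j => Finset.univ.erase j)]
    · simp only [Finset.sum_const, nsmul_eq_mul, hcard]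
    · intro i j
      simp only [Finset.mem_univ, Finset.mem_erase, true_and, and_true, ne_eq]
      tauto
  calc ∑ i, ∑ j ∈ Finset.univ.erase i, |α i * α j|
      ≤ ∑ i, ∑ j ∈ Finset.univ.erase i, ((α i)^2 + (α j)^2) / 2 :=
        Finset.sum_le_sum fun i _ => h1 i
    _ = ((m : ℝ) - 1) * ∑ j, (α j) ^ 2 := by
        have e1 : ∀ i : Fin m, ∑ j ∈ Finset.univ.erase i, ((α i)^2 + (α j)^2)/2
            = (((m : ℝ)-1)*(α i)^2 + ∑ j ∈ Finset.univ.erase i, (α j)^2)/2 := by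
          intro i
          rw [← Finset.sum_div, Finset.sum_add_distrib, Finset.sum_const, nsmul_eq_mul,
            hcard]
        rw [Finset.sum_congr rfl fun i _ => e1 i, ← Finset.sum_div,
          Finset.sum_add_distrib, hsym, ← Finset.mul_sum]
        ring

/-- Quasi-isometry between the dual space ℝ^m and the span of a γ-coherent
dictionary. -/
theorem quasi_isometry_coherent
    {H : Type*} [NormedAddCommGroup H] [InnerProductSpace ℝ H]
    {m : ℕ} (v : Fin m → H) (r R γ : ℝ)
    (hr : 0 < r) (hγ : 0 ≤ γ)
    (hlow : ∀ i, r ≤ ‖v i‖) (hup : ∀ i, ‖v i‖ ≤ R)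
    (hcoh : ∀ i j, i ≠ j → |⟪v i, v j⟫| ≤ γ * ‖v i‖ * ‖v j‖)
    (α : Fin m → ℝ) :
    (r ^ 2 - ((m : ℝ) - 1) * γ * R ^ 2) * ∑ j, (α j) ^ 2 ≤
      ‖∑ j, α j • v j‖ ^ 2 ∧
    ‖∑ j, α j • v j‖ ^ 2 ≤
      (R ^ 2 + ((m : ℝ) - 1) * γ * R ^ 2) * ∑ j, (α j) ^ 2 := by
  rcases Nat.eq_zero_or_pos m with hm | hm
  · subst hm; simp
  have hRnn : 0 ≤ R := le_trans hr.le (le_trans (hlow ⟨0, hm⟩) (hup ⟨0, hm⟩))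
  have hm1 : 0 ≤ (m : ℝ) - 1 := by
    have : (1 : ℝ) ≤ m := by exact_mod_cast hm
    linarith
  have expand : ‖∑ j, α j • v j‖ ^ 2 = ∑ i, ∑ j, α i * α j * ⟪v i, v j⟫ := by
    rw [← real_inner_self_eq_norm_sq, sum_inner]
    refine Finset.sum_congr rfl fun i _ => ?_
    rw [inner_sum]
    refine Finset.sum_congr rfl fun j _ => ?_
    rw [real_inner_smul_left, real_inner_smul_right]; ring
  have split : ∀ i : Fin m, ∑ j, α i * α j * ⟪v i, v j⟫
      = (α i)^2 * ⟪v i, v i⟫ + ∑ j ∈ Finset.univ.erase i, α i * α j * ⟪v i, v j⟫ := by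
    intro i
    rw [← Finset.add_sum_erase _ _ (Finset.mem_univ i)]
    ring_nf
  set D : ℝ := ∑ i, (α i)^2 * ⟪v i, v i⟫ with hD
  set C : ℝ := ∑ i, ∑ j ∈ Finset.univ.erase i, α i * α j * ⟪v i, v j⟫ with hC
  have hsplit : ‖∑ j, α j • v j‖ ^ 2 = D + C := by
    rw [expand, hD, hC, ← Finset.sum_add_distrib]
    exact Finset.sum_congr rfl fun i _ => split i
  have hCbd : |C| ≤ ((m : ℝ) - 1) * γ * R ^ 2 * ∑ j, (α j) ^ 2 := by
    calc |C| ≤ ∑ i, |∑ j ∈ Finset.univ.erase i, α i * α j * ⟪v i, v j⟫| :=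
          Finset.abs_sum_le_sum_abs _ _
      _ ≤ ∑ i, ∑ j ∈ Finset.univ.erase i, |α i * α j * ⟪v i, v j⟫| :=
          Finset.sum_le_sum fun i _ => Finset.abs_sum_le_sum_abs _ _
      _ ≤ ∑ i, ∑ j ∈ Finset.univ.erase i, |α i * α j| * (γ * R ^ 2) := by
          refine Finset.sum_le_sum fun i _ => Finset.sum_le_sum fun j hj => ?_
          have hij : i ≠ j := fun h => (Finset.mem_erase.mp hj).1 h.symm
          rw [abs_mul]
          refine mul_le_mul_of_nonneg_left ?_ (abs_nonneg _)
          have hvv : ‖v i‖ * ‖v j‖ ≤ R * R :=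
            mul_le_mul (hup i) (hup j) (norm_nonneg _) hRnn
          calc |⟪v i, v j⟫| ≤ γ * ‖v i‖ * ‖v j‖ := hcoh i j hij
            _ ≤ γ * (R * R) := by
                rw [mul_assoc]; exact mul_le_mul_of_nonneg_left hvv hγ
            _ = γ * R ^ 2 := by ring
      _ = (∑ i, ∑ j ∈ Finset.univ.erase i, |α i * α j|) * (γ * R ^ 2) := by
          rw [Finset.sum_mul]
          exact Finset.sum_congr rfl fun i _ => (Finset.sum_mul _ _ _).symm
      _ ≤ (((m : ℝ) - 1) * ∑ j, (α j) ^ 2) * (γ * R ^ 2) := by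
          refine mul_le_mul_of_nonneg_right (offdiag_abs_sum_le α) ?_
          positivity
      _ = ((m : ℝ) - 1) * γ * R ^ 2 * ∑ j, (α j) ^ 2 := by ring
  have hDlow : r ^ 2 * ∑ j, (α j) ^ 2 ≤ D := by
    rw [hD, Finset.mul_sum]
    refine Finset.sum_le_sum fun i _ => ?_
    rw [real_inner_self_eq_norm_sq, mul_comm]
    have : r ^ 2 ≤ ‖v i‖ ^ 2 := by nlinarith [hlow i, norm_nonneg (v i), hr.le]
    nlinarith [sq_nonneg (α i)]
  have hDup : D ≤ R ^ 2 * ∑ j, (α j) ^ 2 := by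
    rw [hD, Finset.mul_sum]
    refine Finset.sum_le_sum fun i _ => ?_
    rw [real_inner_self_eq_norm_sq, mul_comm]
    have : ‖v i‖ ^ 2 ≤ R ^ 2 := by nlinarith [hup i, norm_nonneg (v i)]
    nlinarith [sq_nonneg (α i)]
  obtain ⟨h1, h2⟩ := abs_le.mp hCbd
  constructor
  · rw [hsplit]; nlinarith
  · rw [hsplit]; nlinarith
end

section
/- Let H be a real inner product space, m ∈ ℕ, and v : Fin m → H a family of vectors with 0 < r ≤ ‖v i‖ ≤ R for all i. Suppose the dictionary has Babel measure at most γ, i.e., for every index i, ∑_{j ≠ i} |⟪v i, v j⟫| ≤ γ (with γ ≥ 0). Then for every coefficient vector α : Fin m → ℝ, (r² − γ) · ‖α‖² ≤ ‖∑_j α j • v j‖² ≤ (R² + γ) · ‖α‖², where ‖α‖² = ∑_j (α j)². (Quasi-isometry between the dual space ℝ^m and the span of the dictionary, for the Babel measure.) -/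
open scoped RealInnerProductSpace BigOperators

/-- Quasi-isometry between the dual space ℝ^m and the span of a γ-Babel
dictionary. -/
theorem quasi_isometry_babel
    {H : Type*} [NormedAddCommGroup H] [InnerProductSpace ℝ H]
    {m : ℕ} (v : Fin m → H) (r R γ : ℝ)
    (hr : 0 < r) (hγ : 0 ≤ γ)
    (hlow : ∀ i, r ≤ ‖v i‖) (hup : ∀ i, ‖v i‖ ≤ R)
    (hbabel : ∀ i, ∑ j ∈ Finset.univ.erase i, |⟪v i, v j⟫| ≤ γ)
    (α : Fin m → ℝ) :
    (r ^ 2 - γ) * ∑ j, (α j) ^ 2 ≤ ‖∑ j, α j • v j‖ ^ 2 ∧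
    ‖∑ j, α j • v j‖ ^ 2 ≤ (R ^ 2 + γ) * ∑ j, (α j) ^ 2 := by
  classical
  set A := ∑ j, (α j) ^ 2 with hA
  set C := ∑ i, ∑ j ∈ Finset.univ.erase i, α i * α j * ⟪v i, v j⟫ with hCdef
  set D := ∑ i, α i ^ 2 * ⟪v i, v i⟫ with hDdef
  have key : ‖∑ j, α j • v j‖ ^ 2 = ∑ i, ∑ j, α i * α j * ⟪v i, v j⟫ := by
    rw [← real_inner_self_eq_norm_sq, sum_inner]
    refine Finset.sum_congr rfl fun i _ => ?_
    rw [real_inner_smul_left, inner_sum, Finset.mul_sum]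
    refine Finset.sum_congr rfl fun j _ => ?_
    rw [real_inner_smul_right]; ring
  have key2 : ‖∑ j, α j • v j‖ ^ 2 = D + C := by
    rw [key, hDdef, hCdef, ← Finset.sum_add_distrib]
    refine Finset.sum_congr rfl fun i _ => ?_
    rw [← Finset.add_sum_erase _ _ (Finset.mem_univ i), sq]
  have hS1 : ∑ i, ∑ j ∈ Finset.univ.erase i, α i ^ 2 * |⟪v i, v j⟫| ≤ γ * A := by
    calc ∑ i, ∑ j ∈ Finset.univ.erase i, α i ^ 2 * |⟪v i, v j⟫|
        = ∑ i, α i ^ 2 * ∑ j ∈ Finset.univ.erase i, |⟪v i, v j⟫| :=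
          Finset.sum_congr rfl fun i _ => (Finset.mul_sum _ _ _).symm
      _ ≤ ∑ i, α i ^ 2 * γ :=
          Finset.sum_le_sum fun i _ =>
            mul_le_mul_of_nonneg_left (hbabel i) (sq_nonneg _)
      _ = γ * A := by rw [← Finset.sum_mul, mul_comm]
  have hswap : ∑ i, ∑ j ∈ Finset.univ.erase i, α j ^ 2 * |⟪v i, v j⟫|
      = ∑ j, ∑ i ∈ Finset.univ.erase j, α j ^ 2 * |⟪v i, v j⟫| := by
    refine Finset.sum_comm' fun i j => ?_
    simp [Finset.mem_erase, eq_comm, and_comm]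
  have hS2 : ∑ i, ∑ j ∈ Finset.univ.erase i, α j ^ 2 * |⟪v i, v j⟫| ≤ γ * A := by
    rw [hswap]
    calc ∑ j, ∑ i ∈ Finset.univ.erase j, α j ^ 2 * |⟪v i, v j⟫|
        = ∑ j, α j ^ 2 * ∑ i ∈ Finset.univ.erase j, |⟪v j, v i⟫| := by
          refine Finset.sum_congr rfl fun j _ => ?_
          rw [Finset.mul_sum]
          exact Finset.sum_congr rfl fun i _ => by rw [real_inner_comm]
      _ ≤ ∑ j, α j ^ 2 * γ :=
          Finset.sum_le_sum fun j _ =>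
            mul_le_mul_of_nonneg_left (hbabel j) (sq_nonneg _)
      _ = γ * A := by rw [← Finset.sum_mul, mul_comm]
  have hC : |C| ≤ γ * A := by
    have h1 : |C| ≤ ∑ i, ∑ j ∈ Finset.univ.erase i, |α i * α j * ⟪v i, v j⟫| :=
      (Finset.abs_sum_le_sum_abs _ _).trans
        (Finset.sum_le_sum fun i _ => Finset.abs_sum_le_sum_abs _ _)
    have h2 : ∑ i, ∑ j ∈ Finset.univ.erase i, |α i * α j * ⟪v i, v j⟫|
        ≤ ∑ i, ∑ j ∈ Finset.univ.erase i,
            (α i ^ 2 / 2 * |⟪v i, v j⟫| + α j ^ 2 / 2 * |⟪v i, v j⟫|) := by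
      refine Finset.sum_le_sum fun i _ => Finset.sum_le_sum fun j _ => ?_
      rw [abs_mul, abs_mul]
      have habs : |α i| * |α j| ≤ α i ^ 2 / 2 + α j ^ 2 / 2 := by
        nlinarith [sq_nonneg (|α i| - |α j|), sq_abs (α i), sq_abs (α j)]
      nlinarith [abs_nonneg (⟪v i, v j⟫ : ℝ), mul_le_mul_of_nonneg_right habs
        (abs_nonneg (⟪v i, v j⟫ : ℝ))]
    have h3 : ∑ i, ∑ j ∈ Finset.univ.erase i,
        (α i ^ 2 / 2 * |⟪v i, v j⟫| + α j ^ 2 / 2 * |⟪v i, v j⟫|) ≤ γ * A := by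
      have := hS1
      have := hS2
      have e1 : ∑ i, ∑ j ∈ Finset.univ.erase i,
          (α i ^ 2 / 2 * |⟪v i, v j⟫| + α j ^ 2 / 2 * |⟪v i, v j⟫|)
          = (∑ i, ∑ j ∈ Finset.univ.erase i, α i ^ 2 * |⟪v i, v j⟫|) / 2
            + (∑ i, ∑ j ∈ Finset.univ.erase i, α j ^ 2 * |⟪v i, v j⟫|) / 2 := by
        simp_rw [Finset.sum_add_distrib, Finset.sum_div]
        congr 1 <;>
          exact Finset.sum_congr rfl fun i _ => Finset.sum_congr rfl fun j _ => by ring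
      rw [e1]; linarith
    linarith
  have hDlow : r ^ 2 * A ≤ D := by
    rw [hDdef, hA, Finset.mul_sum]
    refine Finset.sum_le_sum fun i _ => ?_
    rw [real_inner_self_eq_norm_sq]
    have : r ^ 2 ≤ ‖v i‖ ^ 2 := pow_le_pow_left₀ hr.le (hlow i) 2
    nlinarith [sq_nonneg (α i)]
  have hDup : D ≤ R ^ 2 * A := by
    rw [hDdef, hA, Finset.mul_sum]
    refine Finset.sum_le_sum fun i _ => ?_
    rw [real_inner_self_eq_norm_sq]
    have : ‖v i‖ ^ 2 ≤ R ^ 2 := pow_le_pow_left₀ (norm_nonneg _) (hup i) 2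
    nlinarith [sq_nonneg (α i)]
  have hCabs := abs_le.mp hC
  constructor
  · rw [key2]; nlinarith
  · rw [key2]; nlinarith
end

section
/- Let H be a real inner product space, m ∈ ℕ, and v : Fin m → H a family of unit-norm vectors (‖v i‖ = 1 for all i). Suppose the dictionary is γ-coherent, i.e., for all i ≠ j, |⟪v i, v j⟫| ≤ γ (with γ ≥ 0). Then for all coefficient vectors α, β : Fin m → ℝ, |⟪∑_j α j • v j, ∑_j β j • v j⟫ − ∑_j (α j)(β j)| ≤ (m−1)·γ·‖α‖·‖β‖, where ‖·‖ denotes the Euclidean norm on ℝ^m. (Quasi-isometry with respect to inner products, for the coherence measure.) -/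
open scoped RealInnerProductSpace BigOperators

/-- Quasi-isometry with respect to inner products for a γ-coherent dictionary
of unit-norm atoms. -/
theorem inner_quasi_isometry_coherent
    {H : Type*} [NormedAddCommGroup H] [InnerProductSpace ℝ H]
    {m : ℕ} (v : Fin m → H) (γ : ℝ) (hγ : 0 ≤ γ)
    (hunit : ∀ i, ‖v i‖ = 1)
    (hcoh : ∀ i j, i ≠ j → |⟪v i, v j⟫| ≤ γ)
    (α β : Fin m → ℝ) :
    |⟪∑ j, α j • v j, ∑ j, β j • v j⟫ - ∑ j, α j * β j| ≤
      ((m : ℝ) - 1) * γ * Real.sqrt (∑ j, (α j) ^ 2) *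
        Real.sqrt (∑ j, (β j) ^ 2) := by
  classical
  rcases Nat.eq_zero_or_pos m with hm | hm
  · subst hm; simp
  set s : Finset (Fin m) := Finset.univ with hs
  have hexp : ⟪∑ j, α j • v j, ∑ j, β j • v j⟫
      = ∑ p ∈ s ×ˢ s, α p.1 * β p.2 * ⟪v p.1, v p.2⟫ := by
    rw [Finset.sum_product]
    rw [sum_inner]
    refine Finset.sum_congr rfl fun i _ => ?_
    rw [inner_sum]
    refine Finset.sum_congr rfl fun j _ => ?_
    rw [real_inner_smul_left, real_inner_smul_right]; ring
  have hsplit : ∑ p ∈ s ×ˢ s, α p.1 * β p.2 * ⟪v p.1, v p.2⟫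
      = (∑ j, α j * β j) + ∑ p ∈ s.offDiag, α p.1 * β p.2 * ⟪v p.1, v p.2⟫ := by
    rw [← Finset.diag_union_offDiag s,
      Finset.sum_union (Finset.disjoint_diag_offDiag s), Finset.sum_diag]
    congr 1
    refine Finset.sum_congr rfl fun i _ => ?_
    have : ⟪v i, v i⟫ = 1 := by
      rw [real_inner_self_eq_norm_sq, hunit]; norm_num
    rw [this, mul_one]
  have key : |⟪∑ j, α j • v j, ∑ j, β j • v j⟫ - ∑ j, α j * β j|
      = |∑ p ∈ s.offDiag, α p.1 * β p.2 * ⟪v p.1, v p.2⟫| := by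
    rw [hexp, hsplit]; ring_nf
  rw [key]
  have h1 : |∑ p ∈ s.offDiag, α p.1 * β p.2 * ⟪v p.1, v p.2⟫|
      ≤ γ * ∑ p ∈ s.offDiag, |α p.1| * |β p.2| := by
    calc |∑ p ∈ s.offDiag, α p.1 * β p.2 * ⟪v p.1, v p.2⟫|
        ≤ ∑ p ∈ s.offDiag, |α p.1 * β p.2 * ⟪v p.1, v p.2⟫| :=
          Finset.abs_sum_le_sum_abs _ _
      _ ≤ ∑ p ∈ s.offDiag, γ * (|α p.1| * |β p.2|) := by
          refine Finset.sum_le_sum fun p hp => ?_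
          have hne : p.1 ≠ p.2 := (Finset.mem_offDiag.mp hp).2.2
          rw [abs_mul, abs_mul]
          calc |α p.1| * |β p.2| * |⟪v p.1, v p.2⟫|
              ≤ |α p.1| * |β p.2| * γ :=
                mul_le_mul_of_nonneg_left (hcoh _ _ hne)
                  (mul_nonneg (abs_nonneg _) (abs_nonneg _))
            _ = γ * (|α p.1| * |β p.2|) := by ring
      _ = γ * ∑ p ∈ s.offDiag, |α p.1| * |β p.2| := by
          rw [Finset.mul_sum]
  have hoffA : ∑ p ∈ s.offDiag, (α p.1) ^ 2 = ((m : ℝ) - 1) * ∑ j, (α j) ^ 2 := by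
    have := Finset.diag_union_offDiag s
    have h2 : ∑ p ∈ s ×ˢ s, (α p.1) ^ 2
        = ∑ p ∈ s.diag, (α p.1) ^ 2 + ∑ p ∈ s.offDiag, (α p.1) ^ 2 := by
      rw [← Finset.sum_union (Finset.disjoint_diag_offDiag s), this]
    have h3 : ∑ p ∈ s ×ˢ s, (α p.1) ^ 2 = (m : ℝ) * ∑ j, (α j) ^ 2 := by
      rw [Finset.sum_product]
      simp [Finset.sum_const, hs, mul_comm, Finset.mul_sum]
    have h4 : ∑ p ∈ s.diag, (α p.1) ^ 2 = ∑ j, (α j) ^ 2 := by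
      rw [Finset.sum_diag]
    rw [h3, h4] at h2; linarith
  have hoffB : ∑ p ∈ s.offDiag, (β p.2) ^ 2 = ((m : ℝ) - 1) * ∑ j, (β j) ^ 2 := by
    have h2 : ∑ p ∈ s ×ˢ s, (β p.2) ^ 2
        = ∑ p ∈ s.diag, (β p.2) ^ 2 + ∑ p ∈ s.offDiag, (β p.2) ^ 2 := by
      rw [← Finset.sum_union (Finset.disjoint_diag_offDiag s),
        Finset.diag_union_offDiag s]
    have h3 : ∑ p ∈ s ×ˢ s, (β p.2) ^ 2 = (m : ℝ) * ∑ j, (β j) ^ 2 := by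
      rw [Finset.sum_product]
      simp [Finset.sum_const, hs]
    have h4 : ∑ p ∈ s.diag, (β p.2) ^ 2 = ∑ j, (β j) ^ 2 := by
      rw [Finset.sum_diag]
    rw [h3, h4] at h2; linarith
  have hm1 : (0:ℝ) ≤ (m : ℝ) - 1 := by
    have : (1:ℝ) ≤ (m:ℝ) := by exact_mod_cast hm
    linarith
  have hcs : ∑ p ∈ s.offDiag, |α p.1| * |β p.2|
      ≤ ((m : ℝ) - 1) * Real.sqrt (∑ j, (α j) ^ 2) * Real.sqrt (∑ j, (β j) ^ 2) := by
    calc ∑ p ∈ s.offDiag, |α p.1| * |β p.2|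
        ≤ Real.sqrt (∑ p ∈ s.offDiag, |α p.1| ^ 2) *
          Real.sqrt (∑ p ∈ s.offDiag, |β p.2| ^ 2) :=
          Real.sum_mul_le_sqrt_mul_sqrt _ _ _
      _ = Real.sqrt (((m:ℝ)-1) * ∑ j, (α j) ^ 2) *
          Real.sqrt (((m:ℝ)-1) * ∑ j, (β j) ^ 2) := by
          simp only [sq_abs]; rw [hoffA, hoffB]
      _ = ((m : ℝ) - 1) * Real.sqrt (∑ j, (α j) ^ 2) * Real.sqrt (∑ j, (β j) ^ 2) := by
          rw [Real.sqrt_mul hm1, Real.sqrt_mul hm1]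
          have : Real.sqrt ((m:ℝ)-1) * Real.sqrt ((m:ℝ)-1) = (m:ℝ)-1 :=
            Real.mul_self_sqrt hm1
          linear_combination Real.sqrt (∑ j, (α j) ^ 2) * Real.sqrt (∑ j, (β j) ^ 2) * this
  calc |∑ p ∈ s.offDiag, α p.1 * β p.2 * ⟪v p.1, v p.2⟫|
      ≤ γ * ∑ p ∈ s.offDiag, |α p.1| * |β p.2| := h1
    _ ≤ γ * (((m : ℝ) - 1) * Real.sqrt (∑ j, (α j) ^ 2) * Real.sqrt (∑ j, (β j) ^ 2)) :=
        mul_le_mul_of_nonneg_left hcs hγ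
    _ = ((m : ℝ) - 1) * γ * Real.sqrt (∑ j, (α j) ^ 2) * Real.sqrt (∑ j, (β j) ^ 2) := by
        ring
end

section
/- Let H be a real inner product space, m ∈ ℕ, and v : Fin m → H a family of unit-norm vectors (‖v i‖ = 1 for all i). Suppose the dictionary has Babel measure at most γ, i.e., for every index i, ∑_{j ≠ i} |⟪v i, v j⟫| ≤ γ (with γ ≥ 0). Then for all coefficient vectors α, β : Fin m → ℝ, |⟪∑_j α j • v j, ∑_j β j • v j⟫ − ∑_j (α j)(β j)| ≤ γ·‖α‖·‖β‖, where ‖·‖ denotes the Euclidean norm on ℝ^m. (Quasi-isometry with respect to inner products, for the Babel measure.) -/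
open scoped RealInnerProductSpace BigOperators

/-- Quasi-isometry with respect to inner products for a γ-Babel dictionary
of unit-norm atoms. -/
theorem inner_quasi_isometry_babel
    {H : Type*} [NormedAddCommGroup H] [InnerProductSpace ℝ H]
    {m : ℕ} (v : Fin m → H) (γ : ℝ) (hγ : 0 ≤ γ)
    (hunit : ∀ i, ‖v i‖ = 1)
    (hbabel : ∀ i, ∑ j ∈ Finset.univ.erase i, |⟪v i, v j⟫| ≤ γ)
    (α β : Fin m → ℝ) :
    |⟪∑ j, α j • v j, ∑ j, β j • v j⟫ - ∑ j, α j * β j| ≤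
      γ * Real.sqrt (∑ j, (α j) ^ 2) * Real.sqrt (∑ j, (β j) ^ 2) := by
  classical
  set G : Fin m → Fin m → ℝ := fun i j => ⟪v i, v j⟫ with hG
  have hGsymm : ∀ i j, G i j = G j i := fun i j => real_inner_comm _ _
  have hinner : ⟪∑ j, α j • v j, ∑ j, β j • v j⟫
      = ∑ i, ∑ j, α i * β j * G i j := by
    rw [sum_inner]
    refine Finset.sum_congr rfl fun i _ => ?_
    rw [inner_sum]
    refine Finset.sum_congr rfl fun j _ => ?_
    rw [real_inner_smul_left, real_inner_smul_right]; ring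
  have hdiag : ∀ i, α i * β i * G i i = α i * β i := by
    intro i
    have : G i i = 1 := by
      simp [hG, real_inner_self_eq_norm_sq, hunit i]
    rw [this, mul_one]
  have hsplit : ⟪∑ j, α j • v j, ∑ j, β j • v j⟫ - ∑ j, α j * β j
      = ∑ i, ∑ j ∈ Finset.univ.erase i, α i * β j * G i j := by
    rw [hinner, ← Finset.sum_sub_distrib]
    refine Finset.sum_congr rfl fun i _ => ?_
    rw [← Finset.add_sum_erase _ _ (Finset.mem_univ i), hdiag i]
    ring
  rw [hsplit, Finset.sum_sigma']
  set S : Finset ((_ : Fin m) × Fin m) :=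
    Finset.univ.sigma (fun i => Finset.univ.erase i) with hS
  have step1 : |∑ p ∈ S, α p.1 * β p.2 * G p.1 p.2|
      ≤ ∑ p ∈ S, Real.sqrt (|G p.1 p.2| * (α p.1) ^ 2)
          * Real.sqrt (|G p.1 p.2| * (β p.2) ^ 2) := by
    refine (Finset.abs_sum_le_sum_abs _ _).trans (Finset.sum_le_sum fun p _ => ?_)
    rw [Real.sqrt_mul (abs_nonneg _), Real.sqrt_mul (abs_nonneg _),
      Real.sqrt_sq_eq_abs, Real.sqrt_sq_eq_abs]
    have : Real.sqrt |G p.1 p.2| * |α p.1| * (Real.sqrt |G p.1 p.2| * |β p.2|)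
        = (Real.sqrt |G p.1 p.2| * Real.sqrt |G p.1 p.2|) * (|α p.1| * |β p.2|) := by
      ring
    rw [this, Real.mul_self_sqrt (abs_nonneg _), abs_mul, abs_mul]
    exact le_of_eq (by ring)
  have step2 : ∑ p ∈ S, Real.sqrt (|G p.1 p.2| * (α p.1) ^ 2)
          * Real.sqrt (|G p.1 p.2| * (β p.2) ^ 2)
      ≤ Real.sqrt (∑ p ∈ S, |G p.1 p.2| * (α p.1) ^ 2)
          * Real.sqrt (∑ p ∈ S, |G p.1 p.2| * (β p.2) ^ 2) :=
    Real.sum_sqrt_mul_sqrt_le _ (fun p => by positivity) (fun p => by positivity)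
  have hrow : ∑ p ∈ S, |G p.1 p.2| * (α p.1) ^ 2 ≤ γ * ∑ j, (α j) ^ 2 := by
    rw [hS, Finset.sum_sigma]
    calc ∑ i, ∑ j ∈ Finset.univ.erase i, |G i j| * (α i) ^ 2
        = ∑ i, (α i) ^ 2 * ∑ j ∈ Finset.univ.erase i, |G i j| := by
          refine Finset.sum_congr rfl fun i _ => ?_
          rw [Finset.mul_sum]
          exact Finset.sum_congr rfl fun j _ => by ring
      _ ≤ ∑ i, (α i) ^ 2 * γ :=
          Finset.sum_le_sum fun i _ => mul_le_mul_of_nonneg_left (hbabel i) (sq_nonneg _)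
      _ = γ * ∑ j, (α j) ^ 2 := by rw [← Finset.sum_mul]; ring
  have hcol : ∑ p ∈ S, |G p.1 p.2| * (β p.2) ^ 2 ≤ γ * ∑ j, (β j) ^ 2 := by
    rw [hS, Finset.sum_sigma]
    have hswap : ∑ i, ∑ j ∈ Finset.univ.erase i, |G i j| * (β j) ^ 2
        = ∑ j, ∑ i ∈ Finset.univ.erase j, |G i j| * (β j) ^ 2 := by
      refine Finset.sum_comm' fun i j => ?_
      simp [ne_comm, eq_comm]
    rw [hswap]
    calc ∑ j, ∑ i ∈ Finset.univ.erase j, |G i j| * (β j) ^ 2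
        = ∑ j, (β j) ^ 2 * ∑ i ∈ Finset.univ.erase j, |G j i| := by
          refine Finset.sum_congr rfl fun j _ => ?_
          rw [Finset.mul_sum]
          exact Finset.sum_congr rfl fun i _ => by rw [hGsymm i j]; ring
      _ ≤ ∑ j, (β j) ^ 2 * γ :=
          Finset.sum_le_sum fun j _ => mul_le_mul_of_nonneg_left (hbabel j) (sq_nonneg _)
      _ = γ * ∑ j, (β j) ^ 2 := by rw [← Finset.sum_mul]; ring
  have step3 : Real.sqrt (∑ p ∈ S, |G p.1 p.2| * (α p.1) ^ 2)
          * Real.sqrt (∑ p ∈ S, |G p.1 p.2| * (β p.2) ^ 2)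
      ≤ Real.sqrt (γ * ∑ j, (α j) ^ 2) * Real.sqrt (γ * ∑ j, (β j) ^ 2) :=
    mul_le_mul (Real.sqrt_le_sqrt hrow) (Real.sqrt_le_sqrt hcol)
      (Real.sqrt_nonneg _) (Real.sqrt_nonneg _)
  have heq : Real.sqrt (γ * ∑ j, (α j) ^ 2) * Real.sqrt (γ * ∑ j, (β j) ^ 2)
      = γ * Real.sqrt (∑ j, (α j) ^ 2) * Real.sqrt (∑ j, (β j) ^ 2) := by
    rw [Real.sqrt_mul hγ, Real.sqrt_mul hγ]
    have : Real.sqrt γ * Real.sqrt γ = γ := Real.mul_self_sqrt hγ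
    calc Real.sqrt γ * Real.sqrt (∑ j, (α j) ^ 2)
          * (Real.sqrt γ * Real.sqrt (∑ j, (β j) ^ 2))
        = (Real.sqrt γ * Real.sqrt γ) * Real.sqrt (∑ j, (α j) ^ 2)
            * Real.sqrt (∑ j, (β j) ^ 2) := by ring
      _ = _ := by rw [this]
  exact step1.trans (step2.trans (step3.trans_eq heq))
end

section
/- Let H be a real inner product space, m ∈ ℕ, and v : Fin m → H a family of unit-norm vectors (‖v i‖ = 1 for all i). Suppose the dictionary is δ-distant, i.e., for all i ≠ j, ‖v i‖² − ⟪v i, v j⟫² / ‖v j‖² ≥ δ² (equivalently, for unit-norm atoms, 1 − ⟪v i, v j⟫² ≥ δ²), with 0 ≤ δ ≤ 1. Then for all coefficient vectors α, β : Fin m → ℝ, |⟪∑_j α j • v j, ∑_j β j • v j⟫ − ∑_j (α j)(β j)| ≤ (m−1)·√(1 − δ²)·‖α‖·‖β‖, where ‖·‖ denotes the Euclidean norm on ℝ^m. (Quasi-isometry with respect to inner products, for the distance measure.) -/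
open scoped RealInnerProductSpace BigOperators

/-- Quasi-isometry with respect to inner products for a δ-distant dictionary
of unit-norm atoms. -/
theorem inner_quasi_isometry_distant
    {H : Type*} [NormedAddCommGroup H] [InnerProductSpace ℝ H]
    {m : ℕ} (v : Fin m → H) (δ : ℝ) (hδ0 : 0 ≤ δ) (hδ1 : δ ≤ 1)
    (hunit : ∀ i, ‖v i‖ = 1)
    (hdist : ∀ i j, i ≠ j → δ ^ 2 ≤ ‖v i‖ ^ 2 - ⟪v i, v j⟫ ^ 2 / ‖v j‖ ^ 2)
    (α β : Fin m → ℝ) :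
    |⟪∑ j, α j • v j, ∑ j, β j • v j⟫ - ∑ j, α j * β j| ≤
      ((m : ℝ) - 1) * Real.sqrt (1 - δ ^ 2) * Real.sqrt (∑ j, (α j) ^ 2) *
        Real.sqrt (∑ j, (β j) ^ 2) := by
  cases m with
  | zero => simp
  | succ n =>
  -- abbreviations
  set A := Real.sqrt (∑ j, (α j) ^ 2) with hA
  set B := Real.sqrt (∑ j, (β j) ^ 2) with hB
  have hA0 : 0 ≤ A := Real.sqrt_nonneg _
  have hB0 : 0 ≤ B := Real.sqrt_nonneg _
  have hs0 : 0 ≤ Real.sqrt (1 - δ ^ 2) := Real.sqrt_nonneg _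
  -- off-diagonal inner products are small
  have hsmall : ∀ i j : Fin (n+1), i ≠ j → |⟪v i, v j⟫| ≤ Real.sqrt (1 - δ ^ 2) := by
    intro i j hij
    have h := hdist i j hij
    rw [hunit i, hunit j] at h
    have h2 : ⟪v i, v j⟫ ^ 2 ≤ 1 - δ ^ 2 := by nlinarith
    calc |⟪v i, v j⟫| = Real.sqrt (⟪v i, v j⟫ ^ 2) := (Real.sqrt_sq_eq_abs _).symm
      _ ≤ Real.sqrt (1 - δ ^ 2) := Real.sqrt_le_sqrt h2
  -- expand the inner product of sums
  have hexp : ⟪∑ j, α j • v j, ∑ j, β j • v j⟫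
      = ∑ i, ∑ j, α i * β j * ⟪v i, v j⟫ := by
    simp_rw [sum_inner, inner_sum, real_inner_smul_left, real_inner_smul_right]
    exact Finset.sum_congr rfl fun i _ => Finset.sum_congr rfl fun j _ => by ring
  have hdiag : ∀ i : Fin (n+1), ⟪v i, v i⟫ = 1 := by
    intro i
    rw [real_inner_self_eq_norm_sq, hunit i]; norm_num
  have hsplit : ⟪∑ j, α j • v j, ∑ j, β j • v j⟫ - ∑ j, α j * β j
      = ∑ i, ∑ j ∈ Finset.univ.erase i, α i * β j * ⟪v i, v j⟫ := by
    rw [hexp, ← Finset.sum_sub_distrib]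
    refine Finset.sum_congr rfl fun i _ => ?_
    rw [← Finset.add_sum_erase _ _ (Finset.mem_univ i), hdiag i]
    ring
  rw [hsplit]
  -- first bound: absolute values
  have hstep1 : |∑ i, ∑ j ∈ Finset.univ.erase i, α i * β j * ⟪v i, v j⟫|
      ≤ ∑ i, ∑ j ∈ Finset.univ.erase i, |α i| * |β j| * Real.sqrt (1 - δ ^ 2) := by
    refine (Finset.abs_sum_le_sum_abs _ _).trans ?_
    refine Finset.sum_le_sum fun i _ => ?_
    refine (Finset.abs_sum_le_sum_abs _ _).trans ?_
    refine Finset.sum_le_sum fun j hj => ?_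
    have hij : i ≠ j := (Finset.ne_of_mem_erase hj).symm
    rw [abs_mul, abs_mul]
    have := hsmall i j hij
    have h1 : 0 ≤ |α i| * |β j| := by positivity
    exact mul_le_mul_of_nonneg_left this h1
  refine hstep1.trans ?_
  -- reindex: j = i + k with k ≠ 0
  have hreindex : ∀ i : Fin (n+1),
      ∑ j ∈ Finset.univ.erase i, |α i| * |β j| * Real.sqrt (1 - δ ^ 2)
      = ∑ k ∈ Finset.univ.erase 0, |α i| * |β (i + k)| * Real.sqrt (1 - δ ^ 2) := by
    intro i
    refine Finset.sum_nbij' (fun j => j - i) (fun k => i + k) ?_ ?_ ?_ ?_ ?_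
    · intro j hj
      simp only [Finset.mem_erase, Finset.mem_univ, and_true] at hj ⊢
      intro h
      exact hj (sub_eq_zero.mp h)
    · intro k hk
      simp only [Finset.mem_erase, Finset.mem_univ, and_true] at hk ⊢
      intro h
      exact hk (by rwa [add_eq_left] at h)
    · intro j _; simp
    · intro k _; simp
    · intro j _; simp
  rw [Finset.sum_congr rfl fun i _ => hreindex i, Finset.sum_comm]
  -- per-shift Cauchy-Schwarz
  have hcs : ∀ k : Fin (n+1),
      ∑ i, |α i| * |β (i + k)| * Real.sqrt (1 - δ ^ 2)
      ≤ Real.sqrt (1 - δ ^ 2) * A * B := by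
    intro k
    have h1 : ∑ i, |α i| * |β (i + k)|
        ≤ Real.sqrt (∑ i, |α i| ^ 2) * Real.sqrt (∑ i, |β (i + k)| ^ 2) :=
      Real.sum_mul_le_sqrt_mul_sqrt _ _ _
    have h2 : ∑ i, |α i| ^ 2 = ∑ j, (α j) ^ 2 := by
      refine Finset.sum_congr rfl fun i _ => sq_abs _
    have h3 : ∑ i, |β (i + k)| ^ 2 = ∑ j, (β j) ^ 2 := by
      rw [Fintype.sum_equiv (Equiv.addRight k) _ (fun j => (β j) ^ 2)
        (fun i => by simp [sq_abs])]
    rw [h2, h3, ← hA, ← hB] at h1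
    calc ∑ i, |α i| * |β (i + k)| * Real.sqrt (1 - δ ^ 2)
        = (∑ i, |α i| * |β (i + k)|) * Real.sqrt (1 - δ ^ 2) := by
          rw [Finset.sum_mul]
      _ ≤ A * B * Real.sqrt (1 - δ ^ 2) := by
          exact mul_le_mul_of_nonneg_right h1 hs0
      _ = Real.sqrt (1 - δ ^ 2) * A * B := by ring
  calc ∑ k ∈ Finset.univ.erase 0, ∑ i, |α i| * |β (i + k)| * Real.sqrt (1 - δ ^ 2)
      ≤ ∑ _k ∈ Finset.univ.erase (0 : Fin (n+1)), Real.sqrt (1 - δ ^ 2) * A * B :=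
        Finset.sum_le_sum fun k _ => hcs k
    _ = ((n : ℝ)) * (Real.sqrt (1 - δ ^ 2) * A * B) := by
        rw [Finset.sum_const, Finset.card_erase_of_mem (Finset.mem_univ _),
          Finset.card_univ, Fintype.card_fin]
        simp [nsmul_eq_mul]
    _ = ((↑(n + 1) : ℝ) - 1) * Real.sqrt (1 - δ ^ 2) * A * B := by
        push_cast; ring
end
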